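/- Let G be a Z2-graded Lie algebra over a field k, i.e. G = G0 ⊕ G1 as vector spaces with [G0,G0] ⊆ G0, [G0,G1] ⊆ G1, [G1,G1] ⊆ G0. Let G₋ be a Lie subalgebra of G such that G = G0 ⊕ G₋ as vector spaces, and let π₊ : G → G0 denote the linear projection onto G0 along G₋. Define a bilinear multiplication on G1 by X*Y = [π₊(X), Y] (which lies in G1). Then for all X, Y, Z, V ∈ G1 the identities (2.6): [X,Y,Z] + [Y,Z,X] + [Z,X,Y] = 0 and (2.7): V*[X,Y,Z] = [V*X,Y,Z] + [X,V*Y,Z] + [X,Y,V*Z] hold; that is, G1 with the operation * is a G-algebra. -/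
import Mathlib


/-- For a Z2-graded Lie algebra `G = G0 ⊕ G1` and a Lie subalgebra
complement `G₋` with `G = G0 ⊕ G₋`, the operation `X*Y = [π₊(X), Y]` on `G1`
satisfies the G-algebra identities (2.6) and (2.7). -/
theorem stmt_0 {k G : Type*} [Field k] [LieRing G] [LieAlgebra k G]
    (G0 G1 Gm : Submodule k G)
    (hG01 : IsCompl G0 G1)
    (h00 : ∀ x ∈ G0, ∀ y ∈ G0, ⁅x, y⁆ ∈ G0)
    (h01 : ∀ x ∈ G0, ∀ y ∈ G1, ⁅x, y⁆ ∈ G1)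
    (h11 : ∀ x ∈ G1, ∀ y ∈ G1, ⁅x, y⁆ ∈ G0)
    (hGmsub : ∀ x ∈ Gm, ∀ y ∈ Gm, ⁅x, y⁆ ∈ Gm)
    (hG0m : IsCompl G0 Gm)
    (π : G →ₗ[k] G)
    (hπ0 : ∀ x, π x ∈ G0)
    (hπm : ∀ x, x - π x ∈ Gm)
    (mul : G → G → G)
    (hmul : ∀ X Y, mul X Y = ⁅π X, Y⁆)
    (As : G → G → G → G)
    (hAs : ∀ X Y Z, As X Y Z = mul (mul X Y) Z - mul X (mul Y Z))
    (tri : G → G → G → G)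
    (htri : ∀ X Y Z, tri X Y Z = As X Y Z - As Y X Z) :
    ∀ X ∈ G1, ∀ Y ∈ G1, ∀ Z ∈ G1, ∀ V ∈ G1,
      tri X Y Z + tri Y Z X + tri Z X Y = 0 ∧
      mul V (tri X Y Z) =
        tri (mul V X) Y Z + tri X (mul V Y) Z + tri X Y (mul V Z) := by
  -- π fixes G0
  have hfix : ∀ x ∈ G0, π x = x := by
    intro x hx
    have h := Submodule.disjoint_def.mp hG0m.disjoint (x - π x)
      (sub_mem hx (hπ0 x)) (hπm x)
    exact (sub_eq_zero.mp h).symm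
  -- π kills Gm
  have hkill : ∀ x ∈ Gm, π x = 0 := by
    intro x hx
    have hm : π x ∈ Gm := by
      have : π x = x - (x - π x) := by abel
      rw [this]; exact sub_mem hx (hπm x)
    exact Submodule.disjoint_def.mp hG0m.disjoint (π x) (hπ0 x) hm
  -- key formula
  have key : ∀ X ∈ G1, ∀ Y ∈ G1, ∀ Z : G, tri X Y Z = ⁅⁅X, Y⁆, Z⁆ := by
    intro X hX Y hY Z
    have h3 : ⁅π X, Y⁆ - ⁅π Y, X⁆ =
        (⁅X, Y⁆ + ⁅π X, π Y⁆) - ⁅X - π X, Y - π Y⁆ := by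
      simp only [lie_sub, sub_lie, ← lie_skew (π Y) X]
      abel
    have hfa : π ⁅π X, Y⁆ - π ⁅π Y, X⁆ = ⁅X, Y⁆ + ⁅π X, π Y⁆ := by
      rw [← map_sub, h3, map_sub,
        hfix _ (add_mem (h11 X hX Y hY) (h00 _ (hπ0 X) _ (hπ0 Y))),
        hkill _ (hGmsub _ (hπm X) _ (hπm Y)), sub_zero]
    simp only [htri, hAs, hmul]
    rw [sub_sub_sub_comm, ← sub_lie, hfa, add_lie, lie_lie (π X) (π Y)]
    abel
  intro X hX Y hY Z hZ V hV
  constructor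
  · rw [key X hX Y hY Z, key Y hY Z hZ X, key Z hZ X hX Y]
    have j := lie_jacobi X Y Z
    simp only [lie_lie]
    simp only [← lie_skew X Z, ← lie_skew Y X, ← lie_skew Z Y, lie_neg]
    linear_combination (norm := abel) (2 : ℤ) • j
  · have hVX : mul V X ∈ G1 := by rw [hmul]; exact h01 _ (hπ0 V) _ hX
    have hVY : mul V Y ∈ G1 := by rw [hmul]; exact h01 _ (hπ0 V) _ hY
    rw [key X hX Y hY Z, key (mul V X) hVX Y hY Z, key X hX (mul V Y) hVY Z,
      key X hX Y hY (mul V Z)]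
    simp only [hmul]
    rw [leibniz_lie (π V) ⁅X, Y⁆ Z, leibniz_lie (π V) X Y, add_lie]
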